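/- Let k ≥ 1 and x, ℓ be integers with ℓ even, ℓ' = ℓ/2, ℓ' ≤ x, and 2k ≤ ℓ. Then Σ_{i=x+k−ℓ'+1}^{2k} (x choose i)·((ℓ−x) choose (2k−i)) ≤ Σ_{i=k+1}^{2k} (ℓ' choose i)·(ℓ' choose (2k−i)) = ((ℓ choose 2k) − (ℓ' choose k)²)/2. -/

import Mathlib

/-- Binomial coefficient on integers: `0` when the lower index is negative or
exceeds the upper index. -/
def ichoose (p q : ℤ) : ℤ :=
  if q < 0 ∨ p < q then 0 else (p.toNat).choose q.toNat

lemma ichoose_natCast (a b : ℕ) : ichoose (a : ℤ) (b : ℤ) = (a.choose b : ℤ) := by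
  unfold ichoose
  split_ifs with h
  · rcases h with h | h
    · omega
    · have hab : a < b := by exact_mod_cast h
      simp [Nat.choose_eq_zero_of_lt hab]
  · simp

lemma ichoose_of_lt {p q : ℤ} (h : p < q) : ichoose p q = 0 := by
  rw [ichoose, if_pos (Or.inr h)]

lemma split_inter_left {A B P Q : Finset ℕ} (hd : Disjoint A B) (h1 : P ⊆ A) (h2 : Q ⊆ B) :
    (P ∪ Q) ∩ A = P := by
  rw [Finset.union_inter_distrib_right, Finset.inter_eq_left.mpr h1,
    Finset.disjoint_iff_inter_eq_empty.mp (hd.symm.mono_left h2), Finset.union_empty]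

lemma fiber_card (A B : Finset ℕ) (hd : Disjoint A B) (m i : ℕ) (him : i ≤ m) :
    (((A ∪ B).powersetCard m).filter (fun S => (S ∩ A).card = i)).card
      = A.card.choose i * B.card.choose (m - i) := by
  rw [← Finset.card_powersetCard, ← Finset.card_powersetCard, ← Finset.card_product]
  apply Finset.card_bij' (fun S _ => (S ∩ A, S ∩ B)) (fun P _ => P.1 ∪ P.2)
  · intro S hS
    simp only [Finset.mem_filter, Finset.mem_powersetCard] at hS
    obtain ⟨⟨hsub, hcard⟩, hia⟩ := hS
    have hSeq : (S ∩ A) ∪ (S ∩ B) = S := by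
      rw [← Finset.inter_union_distrib_left]
      exact Finset.inter_eq_left.mpr hsub
    have hdis : Disjoint (S ∩ A) (S ∩ B) :=
      hd.mono Finset.inter_subset_right Finset.inter_subset_right
    have hsum : (S ∩ A).card + (S ∩ B).card = m := by
      rw [← Finset.card_union_of_disjoint hdis, hSeq, hcard]
    simp only [Finset.mem_product, Finset.mem_powersetCard]
    exact ⟨⟨Finset.inter_subset_right, hia⟩, Finset.inter_subset_right, by omega⟩
  · intro P hP
    simp only [Finset.mem_product, Finset.mem_powersetCard] at hP
    obtain ⟨⟨h1, h1c⟩, h2, h2c⟩ := hP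
    have hdis : Disjoint P.1 P.2 := hd.mono h1 h2
    simp only [Finset.mem_filter, Finset.mem_powersetCard]
    refine ⟨⟨Finset.union_subset_union h1 h2, ?_⟩, ?_⟩
    · rw [Finset.card_union_of_disjoint hdis, h1c, h2c]; omega
    · rw [split_inter_left hd h1 h2, h1c]
  · intro S hS
    simp only [Finset.mem_filter, Finset.mem_powersetCard] at hS
    rw [← Finset.inter_union_distrib_left]
    exact Finset.inter_eq_left.mpr hS.1.1
  · intro P hP
    simp only [Finset.mem_product, Finset.mem_powersetCard] at hP
    obtain ⟨⟨h1, h1c⟩, h2, h2c⟩ := hP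
    have e1 : (P.1 ∪ P.2) ∩ A = P.1 := split_inter_left hd h1 h2
    have e2 : (P.1 ∪ P.2) ∩ B = P.2 := by
      rw [Finset.union_comm]; exact split_inter_left hd.symm h2 h1
    simp [e1, e2]

lemma count_eq (n a m t : ℕ) (ha : a ≤ n) :
    (((Finset.range n).powersetCard m).filter
        (fun S => t ≤ (S ∩ Finset.range a).card)).card
      = ∑ i ∈ Finset.Icc t m, a.choose i * (n - a).choose (m - i) := by
  have hsub : Finset.range a ⊆ Finset.range n := Finset.range_subset_range.mpr ha
  have hU : Finset.range a ∪ (Finset.range n \ Finset.range a) = Finset.range n :=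
    Finset.union_sdiff_of_subset hsub
  have hD : Disjoint (Finset.range a) (Finset.range n \ Finset.range a) :=
    Finset.disjoint_sdiff
  have H : ∀ S ∈ ((Finset.range n).powersetCard m).filter
      (fun S => t ≤ (S ∩ Finset.range a).card),
      (fun S => (S ∩ Finset.range a).card) S ∈ Finset.Icc t m := by
    intro S hS
    simp only [Finset.mem_filter, Finset.mem_powersetCard] at hS
    rw [Finset.mem_Icc]
    refine ⟨hS.2, ?_⟩
    calc (S ∩ Finset.range a).card ≤ S.card := Finset.card_le_card Finset.inter_subset_left
      _ = m := hS.1.2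
  rw [Finset.card_eq_sum_card_fiberwise H]
  refine Finset.sum_congr rfl fun i hi => ?_
  rw [Finset.mem_Icc] at hi
  have heq : (((Finset.range n).powersetCard m).filter
        (fun S => t ≤ (S ∩ Finset.range a).card)).filter
        (fun S => (S ∩ Finset.range a).card = i)
      = ((Finset.range n).powersetCard m).filter
        (fun S => (S ∩ Finset.range a).card = i) := by
    rw [Finset.filter_filter]
    exact Finset.filter_congr fun S _ => by
      constructor
      · exact And.right
      · exact fun h => ⟨h ▸ hi.1, h⟩
  rw [heq, ← hU, fiber_card _ _ hD m i hi.2, Finset.card_sdiff_of_subset hsub]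
  simp

lemma count_mono (n m a t : ℕ) :
    (((Finset.range n).powersetCard m).filter
        (fun S => t + 1 ≤ (S ∩ Finset.range (a + 1)).card)).card
      ≤ (((Finset.range n).powersetCard m).filter
        (fun S => t ≤ (S ∩ Finset.range a).card)).card := by
  refine Finset.card_le_card (Finset.monotone_filter_right _ ?_)
  intro S _ hS
  have h1 : S ∩ Finset.range (a + 1) ⊆ insert a (S ∩ Finset.range a) := by
    intro y hy
    simp only [Finset.mem_inter, Finset.mem_range, Finset.mem_insert] at hy ⊢
    obtain ⟨hyS, hya⟩ := hy
    rcases Nat.lt_or_ge y a with h | h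
    · exact Or.inr ⟨hyS, h⟩
    · exact Or.inl (by omega)
  have h2 : (S ∩ Finset.range (a + 1)).card ≤ (S ∩ Finset.range a).card + 1 :=
    le_trans (Finset.card_le_card h1) (Finset.card_insert_le _ _)
  have h3 : t + 1 ≤ (S ∩ Finset.range (a + 1)).card := hS
  show t ≤ (S ∩ Finset.range a).card
  omega

lemma count_desc (n m k' t : ℕ) : ∀ d : ℕ,
    (((Finset.range n).powersetCard m).filter
        (fun S => t + d ≤ (S ∩ Finset.range (k' + d)).card)).card
      ≤ (((Finset.range n).powersetCard m).filter
        (fun S => t ≤ (S ∩ Finset.range k').card)).card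
  | 0 => le_rfl
  | d + 1 => le_trans (count_mono n m (k' + d) (t + d)) (count_desc n m k' t d)

theorem stmt_15 (k x ℓ : ℕ) (hk : 1 ≤ k) (hℓ : Even ℓ) (hx : ℓ / 2 ≤ x)
    (hkℓ : 2 * k ≤ ℓ) :
    (∑ i ∈ Finset.Icc (x + k - ℓ / 2 + 1) (2 * k),
        ichoose x i * ichoose ((ℓ : ℤ) - x) ((2 * k : ℤ) - i))
      ≤ ∑ i ∈ Finset.Icc (k + 1) (2 * k),
          ((ℓ / 2).choose i * (ℓ / 2).choose (2 * k - i) : ℤ) ∧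
    ((∑ i ∈ Finset.Icc (k + 1) (2 * k),
        (ℓ / 2).choose i * (ℓ / 2).choose (2 * k - i) : ℕ) : ℚ)
      = ((ℓ.choose (2 * k) : ℚ) - ((ℓ / 2).choose k : ℚ) ^ 2) / 2 := by
  set l' := ℓ / 2 with hl'
  have h2l : l' + l' = ℓ := by
    obtain ⟨r, hr⟩ := hℓ
    omega
  have hRHS : (∑ i ∈ Finset.Icc (k + 1) (2 * k), l'.choose i * l'.choose (2 * k - i))
      = (((Finset.range ℓ).powersetCard (2 * k)).filter
          (fun S => k + 1 ≤ (S ∩ Finset.range l').card)).card := by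
    rw [count_eq ℓ l' (2 * k) (k + 1) (by omega), show ℓ - l' = l' from by omega]
  constructor
  · by_cases hxl : x ≤ ℓ
    · obtain ⟨d, rfl⟩ : ∃ d, x = l' + d := ⟨x - l', by omega⟩
      have hb : l' + d + k - l' + 1 = k + 1 + d := by omega
      rw [hb]
      have hL : (∑ i ∈ Finset.Icc (k + 1 + d) (2 * k),
            ichoose (↑(l' + d)) ↑i * ichoose ((ℓ : ℤ) - ↑(l' + d)) ((2 * k : ℤ) - ↑i))
          = ((∑ i ∈ Finset.Icc (k + 1 + d) (2 * k),
              (l' + d).choose i * (ℓ - (l' + d)).choose (2 * k - i) : ℕ) : ℤ) := by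
        rw [Nat.cast_sum]
        refine Finset.sum_congr rfl fun i hi => ?_
        rw [Finset.mem_Icc] at hi
        have e1 : (ℓ : ℤ) - ↑(l' + d) = ((ℓ - (l' + d) : ℕ) : ℤ) := by omega
        have e2 : (2 * k : ℤ) - (i : ℤ) = ((2 * k - i : ℕ) : ℤ) := by omega
        rw [e1, e2, ichoose_natCast, ichoose_natCast]
        push_cast
        ring
      rw [hL]
      have c1 : (∑ i ∈ Finset.Icc (k + 1 + d) (2 * k),
            (l' + d).choose i * (ℓ - (l' + d)).choose (2 * k - i))
          = (((Finset.range ℓ).powersetCard (2 * k)).filter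
              (fun S => k + 1 + d ≤ (S ∩ Finset.range (l' + d)).card)).card :=
        (count_eq ℓ (l' + d) (2 * k) (k + 1 + d) hxl).symm
      have c2 := count_desc ℓ (2 * k) l' (k + 1) d
      calc ((∑ i ∈ Finset.Icc (k + 1 + d) (2 * k),
              (l' + d).choose i * (ℓ - (l' + d)).choose (2 * k - i) : ℕ) : ℤ)
          ≤ ((∑ i ∈ Finset.Icc (k + 1) (2 * k), l'.choose i * l'.choose (2 * k - i) : ℕ) : ℤ) := by
            exact_mod_cast (by rw [c1, hRHS]; exact c2)
        _ = ∑ i ∈ Finset.Icc (k + 1) (2 * k), (l'.choose i * l'.choose (2 * k - i) : ℤ) := by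
            push_cast
            rfl
    · have hz : (∑ i ∈ Finset.Icc (x + k - l' + 1) (2 * k),
          ichoose ↑x ↑i * ichoose ((ℓ : ℤ) - ↑x) ((2 * k : ℤ) - ↑i)) = 0 := by
        refine Finset.sum_eq_zero fun i hi => ?_
        rw [Finset.mem_Icc] at hi
        rw [ichoose_of_lt (show (ℓ : ℤ) - ↑x < (2 * k : ℤ) - ↑i from by omega), mul_zero]
      rw [hz]
      exact Finset.sum_nonneg fun i _ => by positivity
  · have hvan : ℓ.choose (2 * k)
        = ∑ i ∈ Finset.range (2 * k + 1), l'.choose i * l'.choose (2 * k - i) := by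
      rw [← h2l, Nat.add_choose_eq, Finset.Nat.sum_antidiagonal_eq_sum_range_succ_mk]
    have hsplit : ∑ i ∈ Finset.range (2 * k + 1), l'.choose i * l'.choose (2 * k - i)
        = (∑ i ∈ Finset.range k, l'.choose i * l'.choose (2 * k - i))
          + l'.choose k * l'.choose (2 * k - k)
          + ∑ i ∈ Finset.Icc (k + 1) (2 * k), l'.choose i * l'.choose (2 * k - i) := by
      rw [Finset.range_eq_Ico,
        ← Finset.sum_Ico_consecutive _ (by omega : 0 ≤ k + 1) (by omega : k + 1 ≤ 2 * k + 1)]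
      congr 1
      · rw [← Finset.range_eq_Ico, Finset.sum_range_succ]
    have hrefl : (∑ i ∈ Finset.range k, l'.choose i * l'.choose (2 * k - i))
        = ∑ i ∈ Finset.Icc (k + 1) (2 * k), l'.choose i * l'.choose (2 * k - i) := by
      refine Finset.sum_nbij' (fun i => 2 * k - i) (fun i => 2 * k - i) ?_ ?_ ?_ ?_ ?_
      · intro a ha
        rw [Finset.mem_range] at ha
        simp only [Finset.mem_Icc]
        omega
      · intro b hb
        rw [Finset.mem_Icc] at hb
        simp only [Finset.mem_range]
        omega
      · intro a ha
        rw [Finset.mem_range] at ha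
        show 2 * k - (2 * k - a) = a
        omega
      · intro b hb
        rw [Finset.mem_Icc] at hb
        show 2 * k - (2 * k - b) = b
        omega
      · intro a ha
        rw [Finset.mem_range] at ha
        show l'.choose a * l'.choose (2 * k - a)
          = l'.choose (2 * k - a) * l'.choose (2 * k - (2 * k - a))
        rw [show 2 * k - (2 * k - a) = a from by omega]
        ring
    have key : ℓ.choose (2 * k)
        = 2 * (∑ i ∈ Finset.Icc (k + 1) (2 * k), l'.choose i * l'.choose (2 * k - i))
          + l'.choose k ^ 2 := by
      rw [hvan, hsplit, hrefl, show 2 * k - k = k from by omega]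
      ring
    rw [eq_div_iff (by norm_num : (2 : ℚ) ≠ 0)]
    have hq := congrArg (Nat.cast : ℕ → ℚ) key
    push_cast at hq ⊢
    linarith
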